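/- Let α ∈ K. For an F-linear form ℓ : K → F, set s_{α,ℓ} := Σ_{g ∈ G} ℓ(g(α))·g ∈ F[G]. Then α is a normal element of K/F if and only if there exists an F-linear form ℓ : K → F such that s_{α,ℓ} is a unit in the group algebra F[G]. -/

import Mathlib

/-- α is normal iff for some F-linear form ℓ : K → F the
projected orbit sum s_{α,ℓ} = Σ_{g ∈ G} ℓ(g(α))·g is a unit in F[G]. -/
theorem normal_iff_exists_projected_orbitSum_isUnit
    (F K : Type*) [Field F] [Field K] [CharZero F] [Algebra F K]
    [FiniteDimensional F K] [IsGalois F K]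
    [Fintype (K ≃ₐ[F] K)] (α : K) :
    (∃ b : Module.Basis (K ≃ₐ[F] K) F K, ∀ g : K ≃ₐ[F] K, b g = g α) ↔
      ∃ ℓ : K →ₗ[F] F,
        IsUnit (∑ g : K ≃ₐ[F] K, MonoidAlgebra.single g (ℓ (g α))) := by
  classical
  constructor
  · rintro ⟨b, hb⟩
    refine ⟨b.coord 1, ?_⟩
    have h : ∀ g : K ≃ₐ[F] K,
        (b.coord 1) (g α) = if g = 1 then (1 : F) else 0 := by
      intro g
      rw [← hb g, Module.Basis.coord_apply, Module.Basis.repr_self, Finsupp.single_apply]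
    have hsum : (∑ g : K ≃ₐ[F] K, MonoidAlgebra.single g ((b.coord 1) (g α)))
        = MonoidAlgebra.single (1 : K ≃ₐ[F] K) (1 : F) := by
      rw [Finset.sum_eq_single (1 : K ≃ₐ[F] K)]
      · rw [h 1, if_pos rfl]
      · intro g _ hg
        rw [h g, if_neg hg, MonoidAlgebra.single_zero _]
      · intro hx; exact absurd (Finset.mem_univ _) hx
    rw [hsum, ← MonoidAlgebra.one_def]
    exact isUnit_one
  · rintro ⟨ℓ, hs⟩
    set s : MonoidAlgebra F (K ≃ₐ[F] K) :=
      ∑ g : K ≃ₐ[F] K, MonoidAlgebra.single g (ℓ (g α)) with hs_def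
    have hli : LinearIndependent F (fun g : K ≃ₐ[F] K => g α) := by
      rw [Fintype.linearIndependent_iff]
      intro c hc g
      set a : MonoidAlgebra F (K ≃ₐ[F] K) :=
        ∑ h : K ≃ₐ[F] K, MonoidAlgebra.single h⁻¹ (c h) with ha_def
      have hmul : s * a = 0 := by
        rw [hs_def, ha_def, Finset.sum_mul_sum]
        rw [Finset.sum_comm]
        have key : ∀ h : K ≃ₐ[F] K,
            (∑ g : K ≃ₐ[F] K,
              MonoidAlgebra.single g (ℓ (g α)) * MonoidAlgebra.single h⁻¹ (c h))
            = ∑ k : K ≃ₐ[F] K, MonoidAlgebra.single k (ℓ (k (h α)) * c h) := by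
          intro h
          refine Fintype.sum_equiv (Equiv.mulRight h⁻¹) _ _ ?_
          intro x
          simp only [Equiv.coe_mulRight, MonoidAlgebra.single_mul_single]
          congr 2
          rw [← AlgEquiv.mul_apply, inv_mul_cancel_right]
        rw [Finset.sum_congr rfl fun h _ => key h, Finset.sum_comm]
        refine Finset.sum_eq_zero fun k _ => ?_
        simp only [← MonoidAlgebra.singleAddHom_apply]; rw [← map_sum]
        have : (∑ h : K ≃ₐ[F] K, ℓ (k (h α)) * c h) = 0 := by
          have : (∑ h : K ≃ₐ[F] K, ℓ (k (h α)) * c h)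
              = ℓ (k (∑ h : K ≃ₐ[F] K, c h • h α)) := by
            rw [map_sum, map_sum]
            refine Finset.sum_congr rfl fun h _ => ?_
            rw [map_smul, map_smul, smul_eq_mul, mul_comm]
          rw [this, hc, map_zero, map_zero]
        rw [this, map_zero]
      obtain ⟨u, hu⟩ := hs
      have ha0 : a = 0 := by
        have heq : (↑u⁻¹ : MonoidAlgebra F (K ≃ₐ[F] K)) * (s * a) = a := by
          rw [← hu, ← mul_assoc, ← Units.val_mul, inv_mul_cancel, Units.val_one, one_mul]
        rw [hmul, mul_zero] at heq
        exact heq.symm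
      have hz : a.coeff g⁻¹ = 0 := by rw [ha0]; rfl
      simp only [ha_def, MonoidAlgebra.coeff_sum, Finsupp.finset_sum_apply, MonoidAlgebra.coeff_single] at hz
      rw [Finset.sum_eq_single g (fun h _ hh => by
        rw [Finsupp.single_apply, if_neg (fun he => hh (inv_injective he))])
        (fun hx => absurd (Finset.mem_univ _) hx)] at hz
      rwa [Finsupp.single_apply, if_pos rfl] at hz
    have hcard : Fintype.card (K ≃ₐ[F] K) = Module.finrank F K := by
      convert IsGalois.card_aut_eq_finrank F K using 2
      exact Nat.card_eq_fintype_card.symm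
    exact ⟨basisOfLinearIndependentOfCardEqFinrank hli hcard, fun g => by
      rw [coe_basisOfLinearIndependentOfCardEqFinrank]⟩
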